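/- Let $Z_0, Z_1, \dots, Z_T$ be an integrable adapted payoff process on a filtered probability space, and define stopping times backwards by $\tau_T = T$ and $\tau_t = t\,\mathbf 1\{Z_t \ge E[Z_{\tau_{t+1}} \mid \mathcal F_t]\} + \tau_{t+1}\,\mathbf 1\{Z_t < E[Z_{\tau_{t+1}} \mid \mathcal F_t]\}$. Then each $\tau_t$ is a stopping time with values in $\{t,\dots,T\}$, and $E[Z_{\tau_t}] = \sup_{\tau \in \mathcal T_{t,T}} E[Z_\tau]$, where $\mathcal T_{t,T}$ is the set of stopping times with values in $\{t,\dots,T\}$; in particular $E[Z_{\tau_0}]$ is the optimal-stopping value $\sup_{\tau \in \mathcal T_{0,T}} E[Z_\tau]$. -/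

import Mathlib

open MeasureTheory ProbabilityTheory

/-- Discrete-time optimal stopping by backward induction (Snell envelope): for
an integrable adapted payoff `Z_0, …, Z_T` and the stopping times defined backwards by `τ_T = T`
and `τ_t = t` on `{Z_t ≥ E[Z_{τ_{t+1}} | ℱ_t]}`, `τ_t = τ_{t+1}` otherwise, each `τ_t` is a
stopping time with values in `{t, …, T}` and `E[Z_{τ_t}] = sup_{σ ∈ 𝒯_{t,T}} E[Z_σ]`; in
particular `E[Z_{τ_0}]` is the optimal-stopping value. -/
theorem snell_envelope_optimal_stopping
    {Ω : Type*} {m0 : MeasurableSpace Ω} (μ : Measure Ω) [IsProbabilityMeasure μ]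
    (ℱ : Filtration ℕ m0) (T : ℕ)
    (Z : ℕ → Ω → ℝ) (hZadapted : Adapted ℱ Z)
    (hZint : ∀ t, Integrable (Z t) μ)
    (τ : ℕ → Ω → ℕ)
    (hτT : ∀ ω, τ T ω = T)
    (hτrec : ∀ t, t < T → ∀ ω,
      τ t ω = if (μ[fun ω' => Z (τ (t + 1) ω') ω' | ℱ t]) ω ≤ Z t ω
        then t else τ (t + 1) ω) :
    ∀ t, t ≤ T →
      IsStoppingTime ℱ (fun ω => ((τ t ω : ℕ) : WithTop ℕ)) ∧ (∀ ω, t ≤ τ t ω ∧ τ t ω ≤ T) ∧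
      IsGreatest
        {x : ℝ | ∃ σ : Ω → ℕ, IsStoppingTime ℱ (fun ω => ((σ ω : ℕ) : WithTop ℕ)) ∧ (∀ ω, t ≤ σ ω ∧ σ ω ≤ T) ∧
          x = ∫ ω, Z (σ ω) ω ∂μ}
        (∫ ω, Z (τ t ω) ω ∂μ) := by
  have hun : ∀ n : ℕ, ((n : WithTop ℕ)).untopA = n := fun n => rfl
  have hcoe : ∀ a b : ℕ, ((a : WithTop ℕ) = WithTop.some b) ↔ a = b := fun a b => WithTop.coe_eq_coe
  suffices H : ∀ d t, t + d = T →
      IsStoppingTime ℱ (fun ω => ((τ t ω : ℕ) : WithTop ℕ)) ∧ (∀ ω, t ≤ τ t ω ∧ τ t ω ≤ T) ∧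
      ∀ σ : Ω → ℕ, IsStoppingTime ℱ (fun ω => ((σ ω : ℕ) : WithTop ℕ)) → (∀ ω, t ≤ σ ω ∧ σ ω ≤ T) →
        μ[stoppedValue Z (fun ω => ((σ ω : ℕ) : WithTop ℕ)) | ℱ t] ≤ᵐ[μ] μ[stoppedValue Z (fun ω => ((τ t ω : ℕ) : WithTop ℕ)) | ℱ t] by
    intro t ht
    obtain ⟨h1, h2, h3⟩ := H (T - t) t (by omega)
    refine ⟨h1, h2, ⟨τ t, h1, h2, rfl⟩, ?_⟩
    rintro x ⟨σ, hσ, hσb, rfl⟩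
    have hint : Integrable (stoppedValue Z (fun ω => ((σ ω : ℕ) : WithTop ℕ))) μ :=
      integrable_stoppedValue ℕ hσ hZint (N := T) (fun ω => WithTop.coe_le_coe.mpr (hσb ω).2)
    have hint' : Integrable (stoppedValue Z (fun ω => ((τ t ω : ℕ) : WithTop ℕ))) μ :=
      integrable_stoppedValue ℕ h1 hZint (N := T) (fun ω => WithTop.coe_le_coe.mpr (h2 ω).2)
    calc ∫ ω, Z (σ ω) ω ∂μ = ∫ ω, (μ[stoppedValue Z (fun ω => ((σ ω : ℕ) : WithTop ℕ)) | ℱ t]) ω ∂μ :=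
          (integral_condExp (ℱ.le t)).symm
      _ ≤ ∫ ω, (μ[stoppedValue Z (fun ω => ((τ t ω : ℕ) : WithTop ℕ)) | ℱ t]) ω ∂μ :=
          integral_mono_ae integrable_condExp integrable_condExp (h3 σ hσ hσb)
      _ = ∫ ω, Z (τ t ω) ω ∂μ := integral_condExp (ℱ.le t)
  intro d
  induction d with
  | zero =>
    intro t ht
    have hteq : t = T := by omega
    subst hteq
    have hτt : τ t = fun _ => t := funext hτT
    refine ⟨(by simp only [hτT]; exact isStoppingTime_const ℱ _), fun ω => by simp [hτT ω], ?_⟩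
    intro σ hσ hσb
    have hσeq : σ = τ t := by
      funext ω; rw [hτT ω]; exact le_antisymm (hσb ω).2 (hσb ω).1
    rw [hσeq]
  | succ d ih =>
    intro t ht
    have htlt : t < T := by omega
    obtain ⟨hst, hb, hopt⟩ := ih (t + 1) (by omega)
    set U : Ω → ℝ := μ[fun ω' => Z (τ (t + 1) ω') ω' | ℱ t] with hU
    have hUdef : U = μ[stoppedValue Z (fun ω => ((τ (t + 1) ω : ℕ) : WithTop ℕ)) | ℱ t] := rfl
    have hUm : StronglyMeasurable[ℱ t] U := stronglyMeasurable_condExp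
    have hZm : StronglyMeasurable[ℱ t] (Z t) := (hZadapted t).stronglyMeasurable
    set A : Set Ω := {ω | U ω ≤ Z t ω} with hAdef
    have hA : MeasurableSet[ℱ t] A :=
      measurableSet_le hUm.measurable hZm.measurable
    have hSint : Integrable (stoppedValue Z (fun ω => ((τ (t + 1) ω : ℕ) : WithTop ℕ))) μ :=
      integrable_stoppedValue ℕ hst hZint (N := T) (fun ω => WithTop.coe_le_coe.mpr (hb ω).2)
    -- τ t is a stopping time
    have hτst : IsStoppingTime ℱ (fun ω => ((τ t ω : ℕ) : WithTop ℕ)) := by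
      apply isStoppingTime_of_measurableSet_eq
      intro i
      simp only [hcoe]
      rcases lt_trichotomy i t with hi | hi | hi
      · have : {ω | τ t ω = i} = ∅ := by
          ext ω
          simp only [Set.mem_setOf_eq, Set.mem_empty_iff_false, iff_false]
          rw [hτrec t htlt ω]
          split_ifs with h
          · omega
          · have := (hb ω).1; omega
        rw [this]; exact @MeasurableSet.empty _ (ℱ i)
      · have hset : {ω | τ t ω = i} = A := by
          ext ω
          rw [hi]
          simp only [Set.mem_setOf_eq, hAdef]
          rw [hτrec t htlt ω]
          split_ifs with h
          · exact iff_of_true rfl h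
          · exact iff_of_false (by have := (hb ω).1; omega) h
        rw [hset, hi]; exact hA
      · have : {ω | τ t ω = i} = Aᶜ ∩ {ω | τ (t + 1) ω = i} := by
          ext ω
          simp only [Set.mem_setOf_eq, Set.mem_inter_iff, Set.mem_compl_iff, hAdef]
          rw [hτrec t htlt ω]
          split_ifs with h
          · constructor
            · intro h'; omega
            · intro h'; exact absurd h h'.1
          · tauto
        rw [this]
        exact (ℱ.mono hi.le _ hA.compl).inter (by simpa only [hcoe] using hst.measurableSet_eq i)
    -- bounds
    have hτb : ∀ ω, t ≤ τ t ω ∧ τ t ω ≤ T := by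
      intro ω
      rw [hτrec t htlt ω]
      split_ifs with h
      · omega
      · have := hb ω; omega
    refine ⟨hτst, hτb, ?_⟩
    -- decomposition of stoppedValue Z (fun ω => ((τ t ω : ℕ) : WithTop ℕ))
    have hdecomp : stoppedValue Z (fun ω => ((τ t ω : ℕ) : WithTop ℕ))
        = A.indicator (Z t) + Aᶜ.indicator (stoppedValue Z (fun ω => ((τ (t + 1) ω : ℕ) : WithTop ℕ))) := by
      funext ω
      by_cases h : ω ∈ A
      · have hτω : τ t ω = t := by rw [hτrec t htlt ω]; exact if_pos h
        simp [stoppedValue, hτω, Set.indicator_apply, h, hun]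
      · have hτω : τ t ω = τ (t + 1) ω := by rw [hτrec t htlt ω]; exact if_neg h
        simp [stoppedValue, hτω, Set.indicator_apply, h, hun]
    have hcond_τ : μ[stoppedValue Z (fun ω => ((τ t ω : ℕ) : WithTop ℕ)) | ℱ t]
        =ᵐ[μ] A.indicator (Z t) + Aᶜ.indicator U := by
      rw [hdecomp]
      have h1 : Integrable (A.indicator (Z t)) μ :=
        (hZint t).indicator (ℱ.le t _ hA)
      have h2 : Integrable (Aᶜ.indicator (stoppedValue Z (fun ω => ((τ (t + 1) ω : ℕ) : WithTop ℕ)))) μ :=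
        hSint.indicator (ℱ.le t _ hA.compl)
      refine (condExp_add h1 h2 (ℱ t)).trans ?_
      have e1 : μ[A.indicator (Z t) | ℱ t] = A.indicator (Z t) :=
        condExp_of_stronglyMeasurable (ℱ.le t) (hZm.indicator hA) h1
      have e2 : μ[Aᶜ.indicator (stoppedValue Z (fun ω => ((τ (t + 1) ω : ℕ) : WithTop ℕ))) | ℱ t]
          =ᵐ[μ] Aᶜ.indicator U := by
        rw [hUdef]
        exact condExp_indicator hSint hA.compl
      rw [e1]
      exact Filter.EventuallyEq.add (Filter.EventuallyEq.refl _ _) e2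
    -- now the main inequality
    intro σ hσ hσb
    set σ' : Ω → ℕ := fun ω => max (σ ω) (t + 1) with hσ'def
    have hσ'st : IsStoppingTime ℱ (fun ω => ((σ' ω : ℕ) : WithTop ℕ)) := by
        rw [show (fun ω => ((σ' ω : ℕ) : WithTop ℕ))
            = fun ω => max ((σ ω : ℕ) : WithTop ℕ) ((t + 1 : ℕ) : WithTop ℕ) from
          funext fun ω => WithTop.coe_max _ _]
        exact hσ.max_const (t + 1)
    have hσ'b : ∀ ω, t + 1 ≤ σ' ω ∧ σ' ω ≤ T := by
      intro ω
      exact ⟨le_max_right _ _, max_le (hσb ω).2 (by omega)⟩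
    have hσ'int : Integrable (stoppedValue Z (fun ω => ((σ' ω : ℕ) : WithTop ℕ))) μ :=
      integrable_stoppedValue ℕ hσ'st hZint (N := T) (fun ω => WithTop.coe_le_coe.mpr (hσ'b ω).2)
    set B : Set Ω := {ω | σ ω = t} with hBdef
    have hB : MeasurableSet[ℱ t] B := by simpa only [hcoe] using hσ.measurableSet_eq t
    have hdecompσ : stoppedValue Z (fun ω => ((σ ω : ℕ) : WithTop ℕ))
        = B.indicator (Z t) + Bᶜ.indicator (stoppedValue Z (fun ω => ((σ' ω : ℕ) : WithTop ℕ))) := by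
      funext ω
      by_cases h : ω ∈ B
      · have hω : σ ω = t := h
        simp [stoppedValue, hω, Set.indicator_apply, h, hun]
      · have hω : σ ω ≠ t := h
        have hσ'ω : σ' ω = σ ω := by
          have := (hσb ω).1
          simp only [hσ'def]
          omega
        simp [stoppedValue, hσ'ω, Set.indicator_apply, h, hun]
    have hcond_σ : μ[stoppedValue Z (fun ω => ((σ ω : ℕ) : WithTop ℕ)) | ℱ t]
        =ᵐ[μ] B.indicator (Z t) + Bᶜ.indicator (μ[stoppedValue Z (fun ω => ((σ' ω : ℕ) : WithTop ℕ)) | ℱ t]) := by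
      rw [hdecompσ]
      have h1 : Integrable (B.indicator (Z t)) μ :=
        (hZint t).indicator (ℱ.le t _ hB)
      have h2 : Integrable (Bᶜ.indicator (stoppedValue Z (fun ω => ((σ' ω : ℕ) : WithTop ℕ)))) μ :=
        hσ'int.indicator (ℱ.le t _ hB.compl)
      refine (condExp_add h1 h2 (ℱ t)).trans ?_
      have e1 : μ[B.indicator (Z t) | ℱ t] = B.indicator (Z t) :=
        condExp_of_stronglyMeasurable (ℱ.le t) (hZm.indicator hB) h1
      rw [e1]
      exact Filter.EventuallyEq.add (Filter.EventuallyEq.refl _ _)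
        (condExp_indicator hσ'int hB.compl)
    -- tower property chain
    have hkey : μ[stoppedValue Z (fun ω => ((σ' ω : ℕ) : WithTop ℕ)) | ℱ t] ≤ᵐ[μ] U := by
      have t1 : μ[stoppedValue Z (fun ω => ((σ' ω : ℕ) : WithTop ℕ)) | ℱ t]
          =ᵐ[μ] μ[μ[stoppedValue Z (fun ω => ((σ' ω : ℕ) : WithTop ℕ)) | ℱ (t + 1)] | ℱ t] :=
        (condExp_condExp_of_le (ℱ.mono (Nat.le_succ t)) (ℱ.le (t + 1))).symm
      have t2 : μ[μ[stoppedValue Z (fun ω => ((σ' ω : ℕ) : WithTop ℕ)) | ℱ (t + 1)] | ℱ t]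
          ≤ᵐ[μ] μ[μ[stoppedValue Z (fun ω => ((τ (t + 1) ω : ℕ) : WithTop ℕ)) | ℱ (t + 1)] | ℱ t] :=
        condExp_mono integrable_condExp integrable_condExp (hopt σ' hσ'st hσ'b)
      have t3 : μ[μ[stoppedValue Z (fun ω => ((τ (t + 1) ω : ℕ) : WithTop ℕ)) | ℱ (t + 1)] | ℱ t] =ᵐ[μ] U := by
        rw [hUdef]
        exact condExp_condExp_of_le (ℱ.mono (Nat.le_succ t)) (ℱ.le (t + 1))
      exact t1.le.trans (t2.trans t3.le)
    -- pointwise comparison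
    have hpt : (B.indicator (Z t) + Bᶜ.indicator (μ[stoppedValue Z (fun ω => ((σ' ω : ℕ) : WithTop ℕ)) | ℱ t]) : Ω → ℝ)
        ≤ᵐ[μ] A.indicator (Z t) + Aᶜ.indicator U := by
      filter_upwards [hkey] with ω hω
      have e1 : (B.indicator (Z t) + Bᶜ.indicator (μ[stoppedValue Z (fun ω => ((σ' ω : ℕ) : WithTop ℕ)) | ℱ t])) ω
          = if ω ∈ B then Z t ω else (μ[stoppedValue Z (fun ω => ((σ' ω : ℕ) : WithTop ℕ)) | ℱ t]) ω := by
        by_cases hb' : ω ∈ B <;> simp [Set.indicator_apply, hb']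
      have e2 : (A.indicator (Z t) + Aᶜ.indicator U) ω
          = if ω ∈ A then Z t ω else U ω := by
        by_cases ha' : ω ∈ A <;> simp [Set.indicator_apply, ha']
      rw [e1, e2]
      split_ifs with hb' ha' ha'
      · exact le_rfl
      · have ha'' : ¬ U ω ≤ Z t ω := ha'
        exact (not_le.mp ha'').le
      · have ha'' : U ω ≤ Z t ω := ha'
        exact hω.trans ha''
      · exact hω
    calc μ[stoppedValue Z (fun ω => ((σ ω : ℕ) : WithTop ℕ)) | ℱ t]
        =ᵐ[μ] B.indicator (Z t) + Bᶜ.indicator (μ[stoppedValue Z (fun ω => ((σ' ω : ℕ) : WithTop ℕ)) | ℱ t]) := hcond_σ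
      _ ≤ᵐ[μ] A.indicator (Z t) + Aᶜ.indicator U := hpt
      _ =ᵐ[μ] μ[stoppedValue Z (fun ω => ((τ t ω : ℕ) : WithTop ℕ)) | ℱ t] := hcond_τ.symm
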